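/- For every t ∈ [0,1], ∫₀ᵗ Û(t−s) Û(−s)* ds = J_t V J_t. -/

import Mathlib

open Matrix MeasureTheory

noncomputable section

/-- The span of the vectors `A^l B v` for `l < N`, `v ∈ ℝ^m`; for `N = k` this is `E_k`. -/
def kalmanSpan (d m : ℕ) (A : Matrix (Fin d) (Fin d) ℝ) (B : Matrix (Fin d) (Fin m) ℝ)
    (N : ℕ) : Submodule ℝ (Fin d → ℝ) :=
  Submodule.span ℝ {x | ∃ l, l < N ∧ ∃ v : Fin m → ℝ, x = (A ^ l * B).mulVec v}

/-- `d_k = dim E_k` (with `d_0 = 0`). -/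
def dk {d m : ℕ} (A : Matrix (Fin d) (Fin d) ℝ) (B : Matrix (Fin d) (Fin m) ℝ) (k : ℕ) : ℕ :=
  Module.finrank ℝ (kalmanSpan d m A B k)

/-- The level of an index `j` (zero-based): the unique `k ≥ 1` with `d_{k−1} ≤ j < d_k`
(zero-based), i.e. `d_{k−1} < j+1 ≤ d_k` in one-based labelling. -/
def lvl {d m : ℕ} (A : Matrix (Fin d) (Fin d) ℝ) (B : Matrix (Fin d) (Fin m) ℝ)
    (j : Fin d) : ℕ :=
  sInf {k : ℕ | (j : ℕ) < dk A B k}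

/-- The entries of the matrices `u_k`, arranged as a `d × m` array:
for `d_{k−1} < j ≤ d_k` (one-based) the `j`-th row of `u_k` is
`(⟨e_j, A^{k−1} B e_i⟩ / (k−1)!)_i`. -/
def uEnt {d m : ℕ} (A : Matrix (Fin d) (Fin d) ℝ) (B : Matrix (Fin d) (Fin m) ℝ)
    (e : Fin d → Fin d → ℝ) (j : Fin d) (i : Fin m) : ℝ :=
  (e j ⬝ᵥ fun a => (A ^ (lvl A B j - 1) * B) a i) / Nat.factorial (lvl A B j - 1)

/-- `Û(r)`: the `d × m` matrix whose `j`-th row, for `d_{k−1} < j ≤ d_k`, is `r^{k−1}`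
times the corresponding row of `u_k`. -/
def Uhat {d m : ℕ} (A : Matrix (Fin d) (Fin d) ℝ) (B : Matrix (Fin d) (Fin m) ℝ)
    (e : Fin d → Fin d → ℝ) (r : ℝ) : Matrix (Fin d) (Fin m) ℝ :=
  Matrix.of fun j i => r ^ (lvl A B j - 1) * uEnt A B e j i

/-- `J_t`: the diagonal matrix whose `j`-th diagonal entry, for `d_{k−1} < j ≤ d_k`,
is `t^{k−1/2}` (real power). -/
def Jmat {d m : ℕ} (A : Matrix (Fin d) (Fin d) ℝ) (B : Matrix (Fin d) (Fin m) ℝ)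
    (t : ℝ) : Matrix (Fin d) (Fin d) ℝ :=
  Matrix.diagonal fun j => t ^ ((lvl A B j : ℝ) - 1 / 2)

/-- `D_ε`: the diagonal matrix whose `j`-th diagonal entry, for `d_{k−1} < j ≤ d_k`,
is `ε^{k−1}`. -/
def Dmat {d m : ℕ} (A : Matrix (Fin d) (Fin d) ℝ) (B : Matrix (Fin d) (Fin m) ℝ)
    (ε : ℝ) : Matrix (Fin d) (Fin d) ℝ :=
  Matrix.diagonal fun j => ε ^ (lvl A B j - 1)

/-- `V`: the `n × n` block matrix with `(k,l)`-block
`V_{kl} = (−1)^{l+1} u_k u_l* (k−1)!(l−1)!/(k+l−1)!`, written entrywise. -/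
def Vmat {d m : ℕ} (A : Matrix (Fin d) (Fin d) ℝ) (B : Matrix (Fin d) (Fin m) ℝ)
    (e : Fin d → Fin d → ℝ) : Matrix (Fin d) (Fin d) ℝ :=
  Matrix.of fun a b =>
    (-1 : ℝ) ^ (lvl A B b + 1) *
      ((Nat.factorial (lvl A B a - 1) * Nat.factorial (lvl A B b - 1) : ℝ) /
        Nat.factorial (lvl A B a + lvl A B b - 1)) *
      ∑ i : Fin m, uEnt A B e a i * uEnt A B e b i


lemma beta_nat (p q : ℕ) : ∫ s in (0:ℝ)..1, s ^ q * (1 - s) ^ p =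
    (Nat.factorial p * Nat.factorial q : ℝ) / Nat.factorial (p + q + 1) := by
  have hG := Complex.Gamma_mul_Gamma_eq_betaIntegral
    (s := (q : ℂ) + 1) (t := (p : ℂ) + 1) (by simp; positivity) (by simp; positivity)
  have hbeta : Complex.betaIntegral ((q : ℂ) + 1) ((p : ℂ) + 1) =
      ((∫ s in (0:ℝ)..1, s ^ q * (1 - s) ^ p : ℝ) : ℂ) := by
    rw [Complex.betaIntegral, ← intervalIntegral.integral_ofReal]
    refine intervalIntegral.integral_congr fun x hx => ?_
    simp only [add_sub_cancel_right, Complex.cpow_natCast]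
    push_cast
    ring
  rw [hbeta] at hG
  have h3 : ((q:ℂ)+1+((p:ℂ)+1)) = (((p+q+1) : ℕ) : ℂ) + 1 := by push_cast; ring
  rw [h3, Complex.Gamma_nat_eq_factorial, Complex.Gamma_nat_eq_factorial,
    Complex.Gamma_nat_eq_factorial] at hG
  have hne : ((Nat.factorial (p+q+1) : ℂ)) ≠ 0 :=
    Nat.cast_ne_zero.mpr (Nat.factorial_ne_zero _)
  have : ((∫ s in (0:ℝ)..1, s ^ q * (1 - s) ^ p : ℝ) : ℂ) =
      (Nat.factorial p * Nat.factorial q : ℝ) / Nat.factorial (p + q + 1) := by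
    field_simp at hG ⊢
    simp only [Complex.ofReal_mul, Complex.ofReal_natCast]
    linear_combination -hG
  exact_mod_cast this

lemma key_int (p q : ℕ) (t : ℝ) :
    ∫ s in (0:ℝ)..t, (t - s) ^ p * (-s) ^ q =
      (-1 : ℝ) ^ q * (Nat.factorial p * Nat.factorial q / Nat.factorial (p + q + 1)) *
        t ^ (p + q + 1) := by
  have h := intervalIntegral.smul_integral_comp_mul_left
    (f := fun s : ℝ => (t - s) ^ p * (-s) ^ q) (a := 0) (b := 1) t
  simp only [mul_zero, mul_one, smul_eq_mul] at h
  rw [← h]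
  have : ∀ x : ℝ, (t - t * x) ^ p * (-(t * x)) ^ q =
      ((-1 : ℝ) ^ q * t ^ (p + q)) * (x ^ q * (1 - x) ^ p) := by
    intro x
    rw [show t - t * x = t * (1 - x) by ring, show -(t * x) = (-1) * (t * x) by ring]
    rw [mul_pow, mul_pow, mul_pow, pow_add]
    ring
  rw [intervalIntegral.integral_congr (fun x _ => this x),
    intervalIntegral.integral_const_mul, beta_nat]
  ring

lemma lvl_pos' {d m : ℕ} (A : Matrix (Fin d) (Fin d) ℝ) (B : Matrix (Fin d) (Fin m) ℝ)
    {n : ℕ} (hK : kalmanSpan d m A B n = ⊤) (j : Fin d) : 1 ≤ lvl A B j := by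
  have hmem : n ∈ {k : ℕ | (j : ℕ) < dk A B k} := by
    have hd : dk A B n = d := by rw [dk, hK, finrank_top, Module.finrank_fin_fun]
    simp only [Set.mem_setOf_eq, hd]
    exact j.isLt
  rcases Nat.eq_zero_or_pos (lvl A B j) with h0 | h1
  · exfalso
    have := Nat.sInf_mem (Set.nonempty_of_mem hmem)
    rw [lvl] at h0
    rw [h0] at this
    have hz : dk A B 0 = 0 := by
      have hb : kalmanSpan d m A B 0 = ⊥ := by
        rw [kalmanSpan]
        convert Submodule.span_empty
        ext x; simp
      simp [dk, hb]
    simp only [Set.mem_setOf_eq, hz] at this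
    omega
  · exact h1

/-- For every `t ∈ [0,1]`, `∫₀ᵗ Û(t−s) Û(−s)* ds = J_t V J_t`. -/
theorem integral_Uhat_eq_JVJ
    (d m : ℕ) (hd : 0 < d) (hm : 0 < m)
    (A : Matrix (Fin d) (Fin d) ℝ) (B : Matrix (Fin d) (Fin m) ℝ)
    (n : ℕ) (hK : kalmanSpan d m A B n = ⊤)
    (hmin : ∀ N : ℕ, kalmanSpan d m A B N = ⊤ → n ≤ N)
    (e : Fin d → Fin d → ℝ)
    (h_on : ∀ i j : Fin d, e i ⬝ᵥ e j = if i = j then (1:ℝ) else 0)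
    (h_adapt : ∀ k : ℕ, 1 ≤ k → k ≤ n →
      kalmanSpan d m A B k =
        Submodule.span ℝ {x | ∃ j : Fin d, (j : ℕ) < dk A B k ∧ x = e j}) :
    ∀ t : ℝ, t ∈ Set.Icc (0:ℝ) 1 →
      (Matrix.of fun a b =>
          ∫ s in (0:ℝ)..t, (Uhat A B e (t - s) * (Uhat A B e (-s))ᵀ) a b) =
        Jmat A B t * Vmat A B e * Jmat A B t := by
  intro t ht
  obtain ⟨ht0, ht1⟩ := ht
  apply Matrix.ext
  intro a b
  obtain ⟨p, hp⟩ : ∃ p, lvl A B a = p + 1 :=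
    ⟨lvl A B a - 1, (Nat.succ_pred_eq_of_pos (lvl_pos' A B hK a)).symm⟩
  obtain ⟨q, hq⟩ : ∃ q, lvl A B b = q + 1 :=
    ⟨lvl A B b - 1, (Nat.succ_pred_eq_of_pos (lvl_pos' A B hK b)).symm⟩
  have hL : (Matrix.of fun a b =>
        ∫ s in (0:ℝ)..t, (Uhat A B e (t - s) * (Uhat A B e (-s))ᵀ) a b) a b
      = (-1:ℝ)^q * (Nat.factorial p * Nat.factorial q / Nat.factorial (p+q+1)) * t^(p+q+1)
          * ∑ i, uEnt A B e a i * uEnt A B e b i := by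
    show (∫ s in (0:ℝ)..t, (Uhat A B e (t - s) * (Uhat A B e (-s))ᵀ) a b) = _
    have hpt : ∀ s : ℝ, (Uhat A B e (t - s) * (Uhat A B e (-s))ᵀ) a b
        = ((t - s)^p * (-s)^q) * ∑ i, uEnt A B e a i * uEnt A B e b i := by
      intro s
      simp only [Matrix.mul_apply, Matrix.transpose_apply, Uhat, Matrix.of_apply, hp, hq,
        Nat.add_sub_cancel, Finset.mul_sum]
      exact Finset.sum_congr rfl fun i _ => by ring
    rw [intervalIntegral.integral_congr (fun s _ => hpt s),
      intervalIntegral.integral_mul_const, key_int]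
  rw [hL]
  have hR : (Jmat A B t * Vmat A B e * Jmat A B t) a b
      = (t ^ ((lvl A B a : ℝ) - 1/2) * t ^ ((lvl A B b : ℝ) - 1/2)) * Vmat A B e a b := by
    simp only [Jmat, Matrix.diagonal_mul, Matrix.mul_diagonal]
    ring
  rw [hR]
  have hpow : t ^ ((lvl A B a : ℝ) - 1/2) * t ^ ((lvl A B b : ℝ) - 1/2) = t ^ (p+q+1) := by
    rcases eq_or_lt_of_le ht0 with h | h
    · rw [← h, hp, hq]
      rw [show ((p+1:ℕ):ℝ) - 1/2 = (p:ℝ) + 1/2 from by push_cast; ring,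
        Real.zero_rpow (by positivity), zero_mul, zero_pow (by omega)]
    · rw [← Real.rpow_natCast t (p+q+1), ← Real.rpow_add h]
      congr 1
      rw [hp, hq]
      push_cast
      ring
  rw [hpow, Vmat]
  simp only [Matrix.of_apply, hp, hq, Nat.add_sub_cancel,
    show p+1+(q+1)-1 = p+q+1 from by omega]
  ring
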